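/- Let u : ℝ^d_+ → ℝ be monotone (x ≤ y coordinatewise implies u(x) ≤ u(y)) with u(0) = 0, let φ : ℝ^d_+ × ℝ^d_+ → ℝ_+ and Θ ≥ 0 satisfy |u((x+y)/2) − ½u(x) − ½u(y)| ≤ φ(x,y) for all x, y ∈ ℝ^d_+ and Σ_{i=0}^{n} 2^{−i} φ(2^i x, 2^i y) ≤ Θ for all n ≥ 1 and all x, y ∈ ℝ^d_+. Then for every x ∈ ℝ^d_+ the limit v(x) := lim_{n→∞} 2^{−n} u(2^n x) exists, the resulting function v is the restriction to ℝ^d_+ of a linear map on ℝ^d (indeed v(x) = Σ_{i=1}^d xᵢ v(eᵢ) for all x ∈ ℝ^d_+, where eᵢ are the standard unit vectors), and sup_{x ∈ ℝ^d_+} |u(x) − v(x)| ≤ Θ. -/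
import Mathlib

open Filter Finset

private lemma aux_lin (w : ℝ → ℝ)
    (hadd : ∀ s t : ℝ, 0 ≤ s → 0 ≤ t → w (s + t) = w s + w t)
    (hmono : ∀ s t : ℝ, 0 ≤ s → s ≤ t → w s ≤ w t) :
    ∀ t : ℝ, 0 ≤ t → w t = t * w 1 := by
  have h0 : w 0 = 0 := by have := hadd 0 0 le_rfl le_rfl; simp at this; linarith
  have hw1 : 0 ≤ w 1 := by
    have := hmono 0 1 le_rfl zero_le_one; rw [h0] at this; exact this
  have hnat : ∀ (n : ℕ) (t : ℝ), 0 ≤ t → w (n * t) = n * w t := by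
    intro n
    induction n with
    | zero => intro t _; simp [h0]
    | succ n ih =>
      intro t ht
      have h1 : ((n : ℝ) + 1) * t = n * t + t := by ring
      push_cast
      rw [h1, hadd _ _ (by positivity) ht, ih t ht]; ring
  have hq : ∀ q : ℚ, 0 ≤ q → w (q : ℝ) = (q : ℝ) * w 1 := by
    intro q hq0
    have hnum : (0:ℤ) ≤ q.num := Rat.num_nonneg.mpr hq0
    have hden : (0:ℝ) < (q.den : ℝ) := by exact_mod_cast q.den_pos
    have key : (q.den : ℝ) * (q : ℝ) = (q.num : ℝ) := by
      rw [Rat.cast_def]; field_simp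
    have h1 := hnat q.den (q : ℝ) (by exact_mod_cast hq0)
    rw [key] at h1
    have h2 := hnat q.num.toNat 1 zero_le_one
    have h3 : ((q.num.toNat : ℕ) : ℝ) = (q.num : ℝ) := by
      exact_mod_cast Int.toNat_of_nonneg hnum
    rw [mul_one, h3] at h2
    -- h1 : w q.num = q.den * w q ; h2 : w q.num = q.num * w 1
    have h4 : (q.den : ℝ) * w (q:ℝ) = (q.num : ℝ) * w 1 := by rw [← h1, h2]
    refine mul_left_cancel₀ (ne_of_gt hden) ?_
    rw [h4, ← mul_assoc, key]
  intro t ht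
  have hδ : ∀ ε : ℝ, 0 < ε → 0 < ε / (w 1 + 1) := fun ε hε => by positivity
  have hδ2 : ∀ ε : ℝ, 0 < ε → (ε / (w 1 + 1)) * w 1 ≤ ε := by
    intro ε hε
    rw [div_mul_eq_mul_div, div_le_iff₀ (by linarith)]
    nlinarith
  apply le_antisymm
  · refine le_of_forall_pos_le_add fun ε hε => ?_
    obtain ⟨q, hq1, hq2⟩ := exists_rat_btwn (lt_add_of_pos_right t (hδ ε hε))
    have hq0 : (0:ℝ) ≤ (q:ℝ) := le_trans ht hq1.le
    calc w t ≤ w q := hmono t q ht hq1.le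
      _ = q * w 1 := hq q (by exact_mod_cast hq0)
      _ ≤ (t + ε / (w 1 + 1)) * w 1 := mul_le_mul_of_nonneg_right hq2.le hw1
      _ = t * w 1 + (ε / (w 1 + 1)) * w 1 := by ring
      _ ≤ t * w 1 + ε := by linarith [hδ2 ε hε]
  · rcases eq_or_lt_of_le ht with h | h
    · simp [← h, h0]
    refine le_of_forall_pos_le_add fun ε hε => ?_
    have hlt : max 0 (t - ε / (w 1 + 1)) < t := by
      simp only [max_lt_iff]
      exact ⟨h, by linarith [hδ ε hε]⟩
    obtain ⟨p, hp1, hp2⟩ := exists_rat_btwn hlt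
    have hp0 : (0:ℝ) ≤ (p:ℝ) := le_trans (le_max_left _ _) hp1.le
    have hpt : t - ε / (w 1 + 1) ≤ (p:ℝ) := le_trans (le_max_right _ _) hp1.le
    have hwp : w p = p * w 1 := hq p (by exact_mod_cast hp0)
    have hmp : w p ≤ w t := hmono p t hp0 hp2.le
    have h6 : (t - p) * w 1 ≤ (ε / (w 1 + 1)) * w 1 :=
      mul_le_mul_of_nonneg_right (by linarith) hw1
    calc t * w 1 = (p:ℝ) * w 1 + (t - p) * w 1 := by ring
      _ ≤ w p + (ε / (w 1 + 1)) * w 1 := by rw [hwp]; linarith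
      _ ≤ w t + ε := by linarith [hδ2 ε hε]

open Filter Finset





/-- analytic core of Theorem `thm:AA`: a monotone `u` on `ℝ^d₊` with
`u 0 = 0` that approximately satisfies Jensen's equation up to `φ`, with summable
weighted errors bounded by `Θ`, is within `Θ` of the linear function
`v x = lim 2^{-n} u (2^n x)`. -/
theorem stmt_9 (d : ℕ) (u : (Fin d → ℝ) → ℝ)
    (hmono : ∀ x y : Fin d → ℝ, 0 ≤ x → x ≤ y → u x ≤ u y)
    (hu0 : u 0 = 0)
    (φ : (Fin d → ℝ) → (Fin d → ℝ) → ℝ) (hφ : ∀ x y, 0 ≤ φ x y)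
    (Θ : ℝ) (hΘ : 0 ≤ Θ)
    (hJ : ∀ x y : Fin d → ℝ, 0 ≤ x → 0 ≤ y →
      |u ((1 / 2 : ℝ) • (x + y)) - (1 / 2) * u x - (1 / 2) * u y| ≤ φ x y)
    (hsum : ∀ n : ℕ, 1 ≤ n → ∀ x y : Fin d → ℝ, 0 ≤ x → 0 ≤ y →
      ∑ i ∈ Finset.range (n + 1), (1 / 2 : ℝ) ^ i * φ ((2 : ℝ) ^ i • x) ((2 : ℝ) ^ i • y) ≤ Θ) :
    ∃ v : (Fin d → ℝ) → ℝ,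
      (∀ x : Fin d → ℝ, 0 ≤ x →
        Filter.Tendsto (fun n : ℕ => (1 / 2 : ℝ) ^ n * u ((2 : ℝ) ^ n • x))
          Filter.atTop (nhds (v x))) ∧
      (∀ x : Fin d → ℝ, 0 ≤ x → v x = ∑ i, x i * v (Pi.single i 1)) ∧
      (∀ x : Fin d → ℝ, 0 ≤ x → |u x - v x| ≤ Θ) := by
  classical
  -- basic nonnegativity helpers
  have hpos : ∀ (c : ℝ) (x : Fin d → ℝ), 0 ≤ c → 0 ≤ x → 0 ≤ c • x := by
    intro c x hc hx i
    simpa using mul_nonneg hc (hx i)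
  have haddpos : ∀ (x y : Fin d → ℝ), 0 ≤ x → 0 ≤ y → 0 ≤ x + y := by
    intro x y hx hy i
    simpa using add_nonneg (hx i) (hy i)
  set f : (Fin d → ℝ) → ℕ → ℝ := fun x n => (1 / 2 : ℝ) ^ n * u ((2 : ℝ) ^ n • x) with hf
  set G : (Fin d → ℝ) → ℕ → ℝ := fun x i => (1 / 2 : ℝ) ^ i * φ ((2 : ℝ) ^ (i + 1) • x) 0
    with hG
  set v : (Fin d → ℝ) → ℝ := fun x => u x + ∑' i, (f x (i + 1) - f x i) with hv
  -- partial sums of G are bounded by Θ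
  have hGsum : ∀ x : Fin d → ℝ, 0 ≤ x → ∀ n : ℕ, ∑ i ∈ range n, G x i ≤ Θ := by
    intro x hx n
    have h := hsum (max n 1) (le_max_right _ _) ((2 : ℝ) • x) 0
      (hpos 2 x (by norm_num) hx) le_rfl
    simp only [smul_zero, smul_smul, ← pow_succ] at h
    calc ∑ i ∈ range n, G x i ≤ ∑ i ∈ range (max n 1 + 1), G x i := by
          apply sum_le_sum_of_subset_of_nonneg
          · exact range_subset_range.2 (by omega)
          · intro i _ _
            exact mul_nonneg (by positivity) (hφ _ _)
      _ ≤ Θ := h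
  have hGsummable : ∀ x : Fin d → ℝ, 0 ≤ x → Summable (G x) := by
    intro x hx
    exact summable_of_sum_range_le (fun i => mul_nonneg (by positivity) (hφ _ _)) (hGsum x hx)
  -- the difference bound
  have hdle : ∀ x : Fin d → ℝ, 0 ≤ x → ∀ i : ℕ, |f x (i + 1) - f x i| ≤ G x i := by
    intro x hx i
    have hx1 : 0 ≤ (2 : ℝ) ^ (i + 1) • x := hpos _ _ (by positivity) hx
    have h := hJ ((2 : ℝ) ^ (i + 1) • x) 0 hx1 le_rfl
    simp only [add_zero, hu0, mul_zero, sub_zero, smul_smul] at h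
    have h2 : (1 / 2 : ℝ) * (2 : ℝ) ^ (i + 1) = 2 ^ i := by rw [pow_succ]; ring
    rw [h2] at h
    have h3 : f x (i + 1) - f x i
        = -((1 / 2 : ℝ) ^ i * (u ((2 : ℝ) ^ i • x) - 1 / 2 * u ((2 : ℝ) ^ (i + 1) • x))) := by
      simp only [hf, pow_succ]; ring
    rw [h3, abs_neg, abs_mul, abs_of_nonneg (by positivity : (0:ℝ) ≤ (1/2 : ℝ) ^ i)]
    exact mul_le_mul_of_nonneg_left h (by positivity)
  have hdabs : ∀ x : Fin d → ℝ, 0 ≤ x → Summable (fun i => |f x (i + 1) - f x i|) := by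
    intro x hx
    exact Summable.of_nonneg_of_le (fun i => abs_nonneg _) (hdle x hx) (hGsummable x hx)
  have hdsummable : ∀ x : Fin d → ℝ, 0 ≤ x → Summable (fun i => f x (i + 1) - f x i) :=
    fun x hx => (hdabs x hx).of_abs
  -- convergence to v
  have htendsto : ∀ x : Fin d → ℝ, 0 ≤ x → Tendsto (f x) atTop (nhds (v x)) := by
    intro x hx
    have hs := (hdsummable x hx).hasSum.tendsto_sum_nat
    have h := hs.const_add (u x)
    refine h.congr fun n => ?_
    rw [Finset.sum_range_sub (f x) n]
    have hf0 : f x 0 = u x := by simp [hf]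
    rw [hf0]; ring
  -- the error bound
  have herr : ∀ x : Fin d → ℝ, 0 ≤ x → |u x - v x| ≤ Θ := by
    intro x hx
    have h1 : |∑' i, (f x (i + 1) - f x i)| ≤ ∑' i, |f x (i + 1) - f x i| := by
      rw [← Real.norm_eq_abs]
      refine le_trans (norm_tsum_le_tsum_norm ((hdabs x hx).congr
        fun i => (Real.norm_eq_abs _).symm)) ?_
      exact le_of_eq (tsum_congr fun i => Real.norm_eq_abs _)
    have h2 : ∑' i, |f x (i + 1) - f x i| ≤ ∑' i, G x i :=
      Summable.tsum_le_tsum (hdle x hx) (hdabs x hx) (hGsummable x hx)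
    have h3 : ∑' i, G x i ≤ Θ :=
      Summable.tsum_le_of_sum_range_le (hGsummable x hx) (hGsum x hx)
    have h4 : u x - v x = -∑' i, (f x (i + 1) - f x i) := by rw [hv]; ring
    rw [h4, abs_neg]
    linarith
  -- v 0 = 0
  have hv0 : v 0 = 0 := by
    have h1 : f 0 = fun _ : ℕ => (0 : ℝ) := by
      funext n; simp [hf, hu0]
    have h2 := htendsto 0 le_rfl
    rw [h1] at h2
    exact tendsto_nhds_unique h2 tendsto_const_nhds
  -- the weighted errors tend to zero
  have hφ0 : ∀ x y : Fin d → ℝ, 0 ≤ x → 0 ≤ y →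
      Tendsto (fun n : ℕ => (1 / 2 : ℝ) ^ n * φ ((2 : ℝ) ^ n • x) ((2 : ℝ) ^ n • y))
        atTop (nhds 0) := by
    intro x y hx hy
    apply Summable.tendsto_atTop_zero
    apply summable_of_sum_range_le (fun i => mul_nonneg (by positivity) (hφ _ _))
    intro n
    calc ∑ i ∈ range n, (1 / 2 : ℝ) ^ i * φ ((2 : ℝ) ^ i • x) ((2 : ℝ) ^ i • y)
        ≤ ∑ i ∈ range (max n 1 + 1), (1 / 2 : ℝ) ^ i * φ ((2 : ℝ) ^ i • x) ((2 : ℝ) ^ i • y) := by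
          apply sum_le_sum_of_subset_of_nonneg
          · exact range_subset_range.2 (by omega)
          · intro i _ _
            exact mul_nonneg (by positivity) (hφ _ _)
      _ ≤ Θ := hsum (max n 1) (le_max_right _ _) x y hx hy
  -- Jensen equation for v
  have hJv : ∀ x y : Fin d → ℝ, 0 ≤ x → 0 ≤ y →
      v ((1 / 2 : ℝ) • (x + y)) = 1 / 2 * v x + 1 / 2 * v y := by
    intro x y hx hy
    have hxy : 0 ≤ (1 / 2 : ℝ) • (x + y) := hpos _ _ (by norm_num) (haddpos x y hx hy)
    set b : ℕ → ℝ := fun n => f ((1 / 2 : ℝ) • (x + y)) n - 1 / 2 * f x n - 1 / 2 * f y n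
      with hb
    have hbb : ∀ n, |b n| ≤ (1 / 2 : ℝ) ^ n * φ ((2 : ℝ) ^ n • x) ((2 : ℝ) ^ n • y) := by
      intro n
      have harg : (2 : ℝ) ^ n • (1 / 2 : ℝ) • (x + y)
          = (1 / 2 : ℝ) • ((2 : ℝ) ^ n • x + (2 : ℝ) ^ n • y) := by
        rw [smul_comm, smul_add]
      have hbn : b n = (1 / 2 : ℝ) ^ n *
          (u ((1 / 2 : ℝ) • ((2 : ℝ) ^ n • x + (2 : ℝ) ^ n • y))
            - 1 / 2 * u ((2 : ℝ) ^ n • x) - 1 / 2 * u ((2 : ℝ) ^ n • y)) := by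
        rw [hb]; simp only [hf, harg]; ring
      rw [hbn, abs_mul, abs_of_nonneg (by positivity : (0:ℝ) ≤ (1/2:ℝ) ^ n)]
      exact mul_le_mul_of_nonneg_left
        (hJ _ _ (hpos _ _ (by positivity) hx) (hpos _ _ (by positivity) hy)) (by positivity)
    have hb0 : Tendsto b atTop (nhds 0) := by
      apply squeeze_zero_norm _ (hφ0 x y hx hy)
      intro n
      simpa [Real.norm_eq_abs] using hbb n
    have h1 : Tendsto (fun n => b n + 1 / 2 * f x n + 1 / 2 * f y n) atTop
        (nhds (0 + 1 / 2 * v x + 1 / 2 * v y)) :=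
      (hb0.add ((htendsto x hx).const_mul _)).add ((htendsto y hy).const_mul _)
    have h2 : (fun n => b n + 1 / 2 * f x n + 1 / 2 * f y n)
        = f ((1 / 2 : ℝ) • (x + y)) := by
      funext n; rw [hb]; ring
    rw [h2] at h1
    have := tendsto_nhds_unique (htendsto _ hxy) h1
    rw [this]; ring
  -- doubling
  have hdouble : ∀ z : Fin d → ℝ, 0 ≤ z → v ((2 : ℝ) • z) = 2 * v z := by
    intro z hz
    have h1 : Tendsto (fun n => f z (n + 1)) atTop (nhds (v z)) :=
      (htendsto z hz).comp (tendsto_add_atTop_nat 1)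
    have h2 := h1.const_mul (2 : ℝ)
    have h3 : ∀ n : ℕ, 2 * f z (n + 1) = f ((2 : ℝ) • z) n := by
      intro n
      simp only [hf, smul_smul, pow_succ]
      ring_nf
    have h4 : Tendsto (f ((2 : ℝ) • z)) atTop (nhds (2 * v z)) := by
      refine h2.congr fun n => ?_
      exact h3 n
    exact tendsto_nhds_unique (htendsto _ (hpos 2 z (by norm_num) hz)) h4
  -- additivity
  have hadd : ∀ x y : Fin d → ℝ, 0 ≤ x → 0 ≤ y → v (x + y) = v x + v y := by
    intro x y hx hy
    have h1 : (2 : ℝ) • ((1 / 2 : ℝ) • (x + y)) = x + y := by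
      rw [smul_smul]; norm_num
    calc v (x + y) = v ((2 : ℝ) • ((1 / 2 : ℝ) • (x + y))) := by rw [h1]
      _ = 2 * v ((1 / 2 : ℝ) • (x + y)) :=
          hdouble _ (hpos _ _ (by norm_num) (haddpos x y hx hy))
      _ = 2 * (1 / 2 * v x + 1 / 2 * v y) := by rw [hJv x y hx hy]
      _ = v x + v y := by ring
  -- monotonicity of v
  have hmonov : ∀ x y : Fin d → ℝ, 0 ≤ x → x ≤ y → v x ≤ v y := by
    intro x y hx hxy
    refine le_of_tendsto_of_tendsto' (htendsto x hx) (htendsto y (le_trans hx hxy)) fun n => ?_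
    apply mul_le_mul_of_nonneg_left _ (by positivity : (0:ℝ) ≤ (1/2:ℝ) ^ n)
    apply hmono _ _ (hpos _ _ (by positivity) hx)
    intro i
    simp only [Pi.smul_apply, smul_eq_mul]
    exact mul_le_mul_of_nonneg_left (hxy i) (by positivity)
  -- homogeneity
  have hhom : ∀ (c : ℝ) (x : Fin d → ℝ), 0 ≤ c → 0 ≤ x → v (c • x) = c * v x := by
    intro c x hc hx
    have := aux_lin (fun t => v (t • x))
      (by
        intro s t hs ht
        simp only [add_smul]
        exact hadd _ _ (hpos _ _ hs hx) (hpos _ _ ht hx))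
      (by
        intro s t hs hst
        apply hmonov _ _ (hpos _ _ hs hx)
        intro i
        simp only [Pi.smul_apply, smul_eq_mul]
        exact mul_le_mul_of_nonneg_right hst (hx i))
      c hc
    simpa using this
  refine ⟨v, fun x hx => htendsto x hx, ?_, fun x hx => herr x hx⟩
  -- linearity in coordinates
  intro x hx
  have hsingle : ∀ i : Fin d, (0 : Fin d → ℝ) ≤ Pi.single i 1 := by
    intro i j
    simp only [Pi.zero_apply, Pi.single_apply]
    split <;> norm_num
  have hgpos : ∀ i : Fin d, (0 : Fin d → ℝ) ≤ x i • (Pi.single i 1 : Fin d → ℝ) :=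
    fun i => hpos _ _ (hx i) (hsingle i)
  have key : ∀ s : Finset (Fin d),
      v (∑ i ∈ s, x i • (Pi.single i 1 : Fin d → ℝ))
        = ∑ i ∈ s, v (x i • (Pi.single i 1 : Fin d → ℝ)) := by
    intro s
    induction s using Finset.cons_induction with
    | empty => simpa using hv0
    | cons a s ha ih =>
      rw [Finset.sum_cons, Finset.sum_cons, hadd _ _ (hgpos a)
        (Finset.sum_nonneg fun i _ => hgpos i), ih]
  have hxdecomp : x = ∑ i, x i • (Pi.single i 1 : Fin d → ℝ) := by
    funext j
    simp [Finset.sum_apply, Pi.single_apply]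
  calc v x = v (∑ i, x i • (Pi.single i 1 : Fin d → ℝ)) := by rw [← hxdecomp]
    _ = ∑ i, v (x i • (Pi.single i 1 : Fin d → ℝ)) := key univ
    _ = ∑ i, x i * v (Pi.single i 1) := by
        refine Finset.sum_congr rfl fun i _ => ?_
        exact hhom (x i) _ (hx i) (hsingle i)
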